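/- If p ≥ 5 is a prime number, then p^2 divides P_{p-2}, where P_{p-2} is the (p-2)-th elementary symmetric function of {1, 2, …, p-1}. -/

import Mathlib

open Finset Polynomial

section aux

variable (p : ℕ) [hFp : Fact p.Prime]

/-- The integer elementary symmetric functions of `1, …, p-1`. -/
private noncomputable def Ee (k : ℕ) : ℤ :=
  ∑ s ∈ Finset.powersetCard k (Finset.Icc 1 (p - 1)), ∏ a ∈ s, (a : ℤ)

private lemma cast_inj_on :
    Set.InjOn (Nat.cast : ℕ → ZMod p) (Finset.Icc 1 (p - 1)) := by
  have hp1 := hFp.out.one_lt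
  intro a ha b hb hab
  simp only [Finset.coe_Icc, Set.mem_Icc] at ha hb
  have ha' : a < p := by omega
  have hb' : b < p := by omega
  have := congrArg ZMod.val hab
  rwa [ZMod.val_cast_of_lt ha', ZMod.val_cast_of_lt hb'] at this

/-- Step B : `p ∣ E (p-3)`. -/
private lemma p_dvd_E_sub_three (hp5 : 5 ≤ p) : (p : ℤ) ∣ Ee p (p - 3) := by
  have hp1 : 1 < p := hFp.out.one_lt
  set K := ZMod p
  set S : Finset ℕ := Finset.Icc 1 (p - 1) with hS
  have hcardS : S.card = p - 1 := by rw [hS, Nat.card_Icc]; omega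
  set M : Multiset K := S.val.map (Nat.cast : ℕ → K) with hM
  have hcardM : Multiset.card M = p - 1 := by
    rw [hM, Multiset.card_map, ← Finset.card_def, hcardS]
  -- the image finset
  set T : Finset K := S.image (Nat.cast : ℕ → K) with hT
  have hTval : T.val = M := Finset.image_val_of_injOn (cast_inj_on p)
  have h0T : (0 : K) ∉ T := by
    intro h0
    rw [hT, Finset.mem_image] at h0
    obtain ⟨a, ha, ha0⟩ := h0
    rw [hS, Finset.mem_Icc] at ha
    have ha' : a < p := by omega
    have := congrArg ZMod.val ha0
    rw [ZMod.val_cast_of_lt ha', ZMod.val_zero] at this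
    omega
  have hins : insert (0 : K) T = Finset.univ := by
    apply Finset.eq_univ_of_forall
    intro b
    by_cases hb : b = 0
    · simp [hb]
    · refine Finset.mem_insert_of_mem ?_
      rw [hT, Finset.mem_image]
      refine ⟨b.val, ?_, ?_⟩
      · rw [hS, Finset.mem_Icc]
        have h1 : b.val < p := ZMod.val_lt b
        have h2 : b.val ≠ 0 := fun h => hb (by rwa [← ZMod.val_eq_zero])
        omega
      · rw [ZMod.natCast_val, ZMod.cast_id]
  -- product over all field elements
  have hq : ((Finset.univ.val : Multiset K).map fun a => X - C a).prod = X ^ p - X := by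
    have hcard : Fintype.card K = p := ZMod.card p
    have hroots : ((X ^ p - X : K[X])).roots = Finset.univ.val := by
      have := FiniteField.roots_X_pow_card_sub_X K
      rwa [hcard] at this
    have hmonic : (X ^ p - X : K[X]).Monic := by
      apply Polynomial.monic_X_pow_sub
      rw [Polynomial.degree_X]
      exact_mod_cast hp1
    have hdeg : (X ^ p - X : K[X]).natDegree = p :=
      FiniteField.X_pow_card_sub_X_natDegree_eq K hp1
    have hcards : Multiset.card ((X ^ p - X : K[X])).roots = (X ^ p - X : K[X]).natDegree := by
      rw [hroots, hdeg, ← Finset.card_def, Finset.card_univ, hcard]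
    have := Polynomial.prod_multiset_X_sub_C_of_monic_of_roots_card_eq hmonic hcards
    rwa [hroots] at this
  have huniv : (Finset.univ : Finset K).val = 0 ::ₘ M := by
    rw [← hins, Finset.insert_val_of_notMem h0T, hTval]
  have hqM : X * ((M.map fun a => X - C a).prod) = X * (X ^ (p - 1) - 1) := by
    have h1 : X * ((M.map fun a => X - C a).prod)
        = ((Finset.univ.val : Multiset K).map fun a => X - C a).prod := by
      rw [huniv, Multiset.map_cons, Multiset.prod_cons, C_0, sub_zero]
    rw [h1, hq]
    rw [mul_sub, mul_one, ← pow_succ']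
    congr 2
    omega
  have hprodM : ((M.map fun a => X - C a).prod) = X ^ (p - 1) - 1 :=
    mul_left_cancel₀ Polynomial.X_ne_zero hqM
  have hcoeff := Multiset.prod_X_sub_C_coeff M (k := 2) (by omega)
  rw [hprodM, hcardM] at hcoeff
  have h2 : p - 1 - 2 = p - 3 := by omega
  rw [h2] at hcoeff
  have hc0 : (X ^ (p - 1) - 1 : K[X]).coeff 2 = 0 := by
    rw [Polynomial.coeff_sub, Polynomial.coeff_X_pow, Polynomial.coeff_one]
    have h1 : p - 1 ≠ 2 := by omega
    have h2 : (2 : ℕ) ≠ p - 1 := by omega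
    simp [h1, h2]
  rw [hc0] at hcoeff
  have hesymm : M.esymm (p - 3) = 0 := by
    have := hcoeff.symm
    rwa [neg_one_pow_mul_eq_zero_iff] at this
  have hcast : ((Ee p (p - 3) : ℤ) : K) = M.esymm (p - 3) := by
    rw [hM, Finset.esymm_map_val, Ee]
    push_cast
    show ((∑ s ∈ powersetCard (p - 3) (Icc 1 (p - 1)), ∏ a ∈ s, (a : ℤ) : ℤ) : ZMod p) = ∑ x ∈ powersetCard (p - 3) (Icc 1 (p - 1)), ∏ a ∈ x, (a : ZMod p)
    push_cast
    rfl
  rw [hesymm] at hcast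
  exact_mod_cast (ZMod.intCast_zmod_eq_zero_iff_dvd _ p).mp hcast

end aux

/-- If `p ≥ 5` is prime, then `p^2` divides `P_{p-2}`, the `(p-2)`-th elementary
symmetric function of `{1, 2, …, p-1}`. -/
theorem sq_prime_dvd_esymm (p : ℕ) (hp : p.Prime) (hp5 : 5 ≤ p) :
    p ^ 2 ∣ ∑ s ∈ Finset.powersetCard (p - 2) (Finset.Icc 1 (p - 1)), ∏ a ∈ s, a := by
  haveI : Fact p.Prime := ⟨hp⟩
  set S : Finset ℕ := Finset.Icc 1 (p - 1) with hS
  have hcardS : S.card = p - 1 := by rw [hS, Nat.card_Icc]; omega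
  rw [← Int.natCast_dvd_natCast]
  push_cast
  show (p : ℤ) ^ 2 ∣ Ee p (p - 2)
  -- Step A : the key integral identity
  have hA : ∑ k ∈ Finset.range (p - 1), (-1 : ℤ) ^ k * Ee p k * (p : ℤ) ^ (p - 1 - k) = 0 := by
    have hexp : ∏ a ∈ S, ((p : ℤ) - (a : ℤ)) =
        ∑ t ∈ S.powerset, (-1 : ℤ) ^ t.card * (∏ a ∈ S \ t, (p : ℤ)) * ∏ a ∈ t, (a : ℤ) :=
      Finset.prod_sub _ _ S
    have hlhs : ∏ a ∈ S, ((p : ℤ) - (a : ℤ)) = ∏ a ∈ S, (a : ℤ) := by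
      apply Finset.prod_nbij' (fun a => p - a) (fun a => p - a)
      · intro a ha; simp only [hS, Finset.mem_Icc] at ha ⊢; omega
      · intro a ha; simp only [hS, Finset.mem_Icc] at ha ⊢; omega
      · intro a ha; simp only [hS, Finset.mem_Icc] at ha; omega
      · intro a ha; simp only [hS, Finset.mem_Icc] at ha; omega
      · intro a ha; simp only [hS, Finset.mem_Icc] at ha; omega
    have hgroup : ∑ t ∈ S.powerset, (-1 : ℤ) ^ t.card * (∏ a ∈ S \ t, (p : ℤ)) * ∏ a ∈ t, (a : ℤ)
        = ∑ k ∈ Finset.range (S.card + 1), (-1 : ℤ) ^ k * Ee p k * (p : ℤ) ^ (p - 1 - k) := by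
      rw [Finset.powerset_card_biUnion, Finset.sum_biUnion (fun i _ j _ h => Finset.pairwise_disjoint_powersetCard S h)]
      apply Finset.sum_congr rfl
      intro k hk
      rw [Finset.mem_range] at hk
      have hterm : ∀ t ∈ Finset.powersetCard k S,
          (-1 : ℤ) ^ t.card * (∏ a ∈ S \ t, (p : ℤ)) * ∏ a ∈ t, (a : ℤ)
            = ((-1 : ℤ) ^ k * (p : ℤ) ^ (p - 1 - k)) * ∏ a ∈ t, (a : ℤ) := by
        intro t ht
        rw [Finset.mem_powersetCard] at ht
        obtain ⟨hts, htc⟩ := ht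
        rw [Finset.prod_const, Finset.card_sdiff_of_subset hts, htc, hcardS]
      rw [Finset.sum_congr rfl hterm, ← Finset.mul_sum, Ee, ← hS]
      ring
    have hEn : Ee p (p - 1) = ∏ a ∈ S, (a : ℤ) := by
      rw [Ee, ← hS, ← hcardS, Finset.powersetCard_self, Finset.sum_singleton]
    have key : ∑ k ∈ Finset.range (S.card + 1),
        (-1 : ℤ) ^ k * Ee p k * (p : ℤ) ^ (p - 1 - k) = ∏ a ∈ S, (a : ℤ) := by
      rw [← hgroup, ← hexp, hlhs]
    rw [hcardS, Finset.sum_range_succ] at key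
    have hlast : (-1 : ℤ) ^ (p - 1) * Ee p (p - 1) * (p : ℤ) ^ (p - 1 - (p - 1))
        = Ee p (p - 1) := by
      have hodd : Odd p := hp.odd_of_ne_two (by omega)
      have heven : Even (p - 1) := by
        obtain ⟨m, hm⟩ := hodd; exact ⟨m, by omega⟩
      rw [heven.neg_one_pow, Nat.sub_self, pow_zero]
      ring
    rw [hlast, hEn] at key
    linarith [key]
  -- split off the last term (k = p-2)
  have hsplit : ∑ k ∈ Finset.range (p - 2), (-1 : ℤ) ^ k * Ee p k * (p : ℤ) ^ (p - 1 - k)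
      + (-1 : ℤ) ^ (p - 2) * Ee p (p - 2) * (p : ℤ) = 0 := by
    have h1 : ∑ k ∈ Finset.range ((p - 2) + 1),
        (-1 : ℤ) ^ k * Ee p k * (p : ℤ) ^ (p - 1 - k) = 0 := by
      rw [show (p - 2) + 1 = p - 1 by omega]; exact hA
    rw [Finset.sum_range_succ, show p - 1 - (p - 2) = 1 by omega, pow_one] at h1
    exact h1
  -- p^3 divides the remaining sum
  have hdvd : (p : ℤ) ^ 3 ∣ ∑ k ∈ Finset.range (p - 2),
      (-1 : ℤ) ^ k * Ee p k * (p : ℤ) ^ (p - 1 - k) := by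
    apply Finset.dvd_sum
    intro k hk
    rw [Finset.mem_range] at hk
    rcases eq_or_lt_of_le (Nat.le_sub_one_of_lt hk) with hk3 | hk3
    · -- k = p - 3
      have hk3' : k = p - 3 := by omega
      have he : p - 1 - k = 2 := by omega
      subst hk3'
      rw [he]
      obtain ⟨c, hc⟩ := p_dvd_E_sub_three p hp5
      rw [hc]
      exact ⟨(-1 : ℤ) ^ (p - 3) * c, by ring⟩
    · -- k ≤ p - 4
      apply Dvd.dvd.mul_left
      apply pow_dvd_pow
      omega
  have hfin : (p : ℤ) ^ 3 ∣ Ee p (p - 2) * (p : ℤ) := by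
    have h1 : (-1 : ℤ) ^ (p - 2) * Ee p (p - 2) * (p : ℤ)
        = - ∑ k ∈ Finset.range (p - 2), (-1 : ℤ) ^ k * Ee p k * (p : ℤ) ^ (p - 1 - k) := by
      linarith [hsplit]
    have h2 : (p : ℤ) ^ 3 ∣ (-1 : ℤ) ^ (p - 2) * (Ee p (p - 2) * (p : ℤ)) := by
      rw [← mul_assoc, h1]; exact hdvd.neg_right
    rcases Nat.even_or_odd (p - 2) with he | ho
    · rw [he.neg_one_pow, one_mul] at h2; exact h2
    · rw [ho.neg_one_pow, neg_mul, dvd_neg, one_mul] at h2; exact h2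
  have hp0 : (p : ℤ) ≠ 0 := by positivity
  have h3 : (p : ℤ) * (p : ℤ) ^ 2 ∣ (p : ℤ) * Ee p (p - 2) := by
    rw [mul_comm (Ee p (p - 2)) ((p : ℤ))] at hfin
    calc (p : ℤ) * (p : ℤ) ^ 2 = (p : ℤ) ^ 3 := by ring
      _ ∣ _ := hfin
  exact (mul_dvd_mul_iff_left hp0).mp h3
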